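/- Let Γ be a group generated by a finite symmetric set S. If for every s ∈ S the function n ↦ |Cl(s) ∩ B_n| is bounded by a polynomial in n, then Γ/Z(Γ) has polynomial growth. -/
import Mathlib

def wordBall {Γ : Type*} [Group Γ] (S : Set Γ) (n : ℕ) : Set Γ :=
  {g | ∃ l : List Γ, l.length ≤ n ∧ (∀ x ∈ l, x ∈ S) ∧ l.prod = g}

noncomputable def wlen {Γ : Type*} [Group Γ] (S : Set Γ) (g : Γ) : ℕ :=
  sInf {n | g ∈ wordBall S n}

def conjClass {Γ : Type*} [Group Γ] (h : Γ) : Set Γ := {y | ∃ g : Γ, g⁻¹ * h * g = y}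

noncomputable def cosetLen {Γ : Type*} [Group Γ] (S : Set Γ) (C : Subgroup Γ)
    (x : Γ ⧸ C) : ℕ :=
  sInf {n | ∃ g : Γ, (QuotientGroup.mk g : Γ ⧸ C) = x ∧ wlen S g ≤ n}

def schreierBall {Γ : Type*} [Group Γ] (S : Set Γ) (C : Subgroup Γ) (n : ℕ) :
    Set (Γ ⧸ C) := {x | cosetLen S C x ≤ n}

/-- A function `f : ℕ → ℕ` is polynomially bounded. -/
def PolyBnd (f : ℕ → ℕ) : Prop := ∃ C d : ℕ, ∀ n, f n ≤ C * (n + 1) ^ d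

section aux

variable {Γ : Type*} [Group Γ]

lemma mul_mem_wordBall {S : Set Γ} {m n : ℕ} {g h : Γ}
    (hg : g ∈ wordBall S m) (hh : h ∈ wordBall S n) : g * h ∈ wordBall S (m + n) := by
  obtain ⟨l1, hl1, hm1, rfl⟩ := hg
  obtain ⟨l2, hl2, hm2, rfl⟩ := hh
  exact ⟨l1 ++ l2, by simpa using Nat.add_le_add hl1 hl2,
    by intro x hx; rcases List.mem_append.mp hx with h | h; exacts [hm1 x h, hm2 x h],
    by simp⟩

lemma inv_mem_wordBall {S : Set Γ} (hsym : S⁻¹ = S) {n : ℕ} {g : Γ}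
    (hg : g ∈ wordBall S n) : g⁻¹ ∈ wordBall S n := by
  obtain ⟨l, hl, hm, rfl⟩ := hg
  refine ⟨(l.map fun x => x⁻¹).reverse, by simpa using hl, ?_, (List.prod_inv_reverse l).symm⟩
  intro x hx
  simp only [List.mem_reverse, List.mem_map] at hx
  obtain ⟨y, hy, rfl⟩ := hx
  rw [← hsym]
  exact Set.inv_mem_inv.mpr (hm y hy)

lemma single_mem_wordBall {S : Set Γ} {s : Γ} (hs : s ∈ S) : s ∈ wordBall S 1 :=
  ⟨[s], by simp, by simpa using hs, by simp⟩

lemma wordBall_finite (S : Finset Γ) (n : ℕ) : (wordBall (S : Set Γ) n).Finite := by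
  induction n with
  | zero =>
    apply Set.Finite.subset (Set.finite_singleton 1)
    rintro g ⟨l, hl, -, rfl⟩
    simp [List.length_eq_zero_iff.mp (Nat.le_zero.mp hl)]
  | succ n ih =>
    apply Set.Finite.subset (Set.Finite.insert 1
      (Set.Finite.biUnion S.finite_toSet fun s _ => ih.image fun g => s * g))
    rintro g ⟨l, hl, hm, rfl⟩
    match l with
    | [] => simp
    | s :: t =>
      right
      refine Set.mem_biUnion (hm s (by simp)) ⟨t.prod, ⟨t, ?_, fun x hx => hm x (by simp [hx]), rfl⟩, by simp⟩
      simpa using Nat.succ_le_succ_iff.mp hl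

lemma mem_wordBall_wlen {S : Set Γ} (hsym : S⁻¹ = S) (hgen : Subgroup.closure S = ⊤)
    (g : Γ) : g ∈ wordBall S (wlen S g) := by
  have hne : {n | g ∈ wordBall S n}.Nonempty := by
    have hg : g ∈ Submonoid.closure S := by
      have h1 : g ∈ (Subgroup.closure S).toSubmonoid := hgen ▸ Subgroup.mem_top g
      rwa [Subgroup.closure_toSubmonoid, hsym, Set.union_self] at h1
    obtain ⟨l, hl, hprod⟩ := Submonoid.exists_list_of_mem_closure hg
    exact ⟨l.length, l, le_rfl, hl, hprod⟩
  exact Nat.sInf_mem hne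

lemma center_swap {a b : Γ} (h : a * b⁻¹ ∈ Subgroup.center Γ) :
    a⁻¹ * b ∈ Subgroup.center Γ := by
  have hz : b * a⁻¹ ∈ Subgroup.center Γ := by
    simpa [mul_inv_rev] using (Subgroup.center Γ).inv_mem h
  have h2 := Subgroup.mem_center_iff.mp hz a⁻¹
  have h3 : a⁻¹ * b = b * a⁻¹ := by
    have := congrArg (· * a) h2
    simpa [mul_assoc] using this
  rw [h3]; exact hz

lemma wordBall_mono {S : Set Γ} {m n : ℕ} (h : m ≤ n) : wordBall S m ⊆ wordBall S n := by
  rintro g ⟨l, hl, hm, rfl⟩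
  exact ⟨l, hl.trans h, hm, rfl⟩

end aux

/-- If every generator has a conjugacy class of polynomially bounded growth, then
the quotient of `Γ` by its center has polynomial growth. -/
theorem stmt5 (Γ : Type*) [Group Γ] (S : Finset Γ) (hsym : (S : Set Γ)⁻¹ = (S : Set Γ))
    (hgen : Subgroup.closure (S : Set Γ) = ⊤)
    (hcl : ∀ s ∈ S, PolyBnd (fun n => (conjClass s ∩ wordBall (S : Set Γ) n).ncard)) :
    PolyBnd (fun n => (schreierBall (S : Set Γ) (Subgroup.center Γ) n).ncard) := by
  classical
  -- choose constants
  choose! C d hCd using hcl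
  -- representative of each coset realizing cosetLen
  have hrep : ∀ x : Γ ⧸ Subgroup.center Γ, ∃ g : Γ,
      (QuotientGroup.mk g : Γ ⧸ Subgroup.center Γ) = x ∧
        wlen (S : Set Γ) g ≤ cosetLen (S : Set Γ) (Subgroup.center Γ) x := by
    intro x
    have hne : {n | ∃ g : Γ, (QuotientGroup.mk g : Γ ⧸ Subgroup.center Γ) = x ∧
        wlen (S : Set Γ) g ≤ n}.Nonempty := by
      obtain ⟨g, rfl⟩ := QuotientGroup.mk_surjective x
      exact ⟨wlen (S : Set Γ) g, g, rfl, le_rfl⟩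
    exact Nat.sInf_mem hne
  choose rep hrep1 hrep2 using hrep
  set D : ℕ := ∑ s : {x // x ∈ S}, d (s : Γ) with hD
  refine ⟨(∏ s : {x // x ∈ S}, C (s : Γ)) * 2 ^ D, D, fun n => ?_⟩
  -- target product set
  set A : {s // s ∈ S} → Set Γ := fun s => conjClass (s : Γ) ∩ wordBall (S : Set Γ) (2 * n + 1)
    with hA
  have hAfin : ∀ s, (A s).Finite := fun s =>
    Set.Finite.subset (wordBall_finite S (2 * n + 1)) Set.inter_subset_right
  have hstep : (schreierBall (S : Set Γ) (Subgroup.center Γ) n).ncard ≤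
      (Set.univ.pi A).ncard := by
    refine Set.ncard_le_ncard_of_injOn
      (fun x => fun s : {s // s ∈ S} => (rep x)⁻¹ * s * rep x) ?_ ?_ (Set.Finite.pi hAfin)
    · intro x hx
      intro s _
      have hw : rep x ∈ wordBall (S : Set Γ) n :=
        wordBall_mono ((hrep2 x).trans hx) (mem_wordBall_wlen hsym hgen (rep x))
      constructor
      · exact ⟨rep x, rfl⟩
      · have : (rep x)⁻¹ * (s : Γ) * rep x ∈ wordBall (S : Set Γ) (n + 1 + n) :=
          mul_mem_wordBall (mul_mem_wordBall (inv_mem_wordBall hsym hw)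
            (single_mem_wordBall s.2)) hw
        exact wordBall_mono (by omega) this
    · intro x _ y _ hxy
      have hc : rep x * (rep y)⁻¹ ∈ Subgroup.center Γ := by
        rw [Subgroup.mem_center_iff]
        intro g
        have hg : g ∈ Subgroup.centralizer {rep x * (rep y)⁻¹} := by
          have hle : Subgroup.closure (S : Set Γ) ≤
              Subgroup.centralizer {rep x * (rep y)⁻¹} := by
            rw [Subgroup.closure_le]
            intro s hs
            rw [SetLike.mem_coe, Subgroup.mem_centralizer_iff]
            rintro h rfl
            have := congrFun hxy ⟨s, hs⟩
            simp only at this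
            -- from (rep x)⁻¹ s (rep x) = (rep y)⁻¹ s (rep y)
            have h1 : s * (rep x * (rep y)⁻¹) = rep x * (rep y)⁻¹ * s := by
              have h2 : rep x * ((rep x)⁻¹ * s * rep x) * (rep y)⁻¹ =
                  rep x * ((rep y)⁻¹ * s * rep y) * (rep y)⁻¹ := by rw [this]
              group at h2 ⊢
              simpa using h2
            exact h1.symm
          exact hle (hgen ▸ Subgroup.mem_top g)
        rw [Subgroup.mem_centralizer_iff] at hg
        exact (hg _ rfl).symm
      have : (QuotientGroup.mk (rep x) : Γ ⧸ Subgroup.center Γ) = QuotientGroup.mk (rep y) := by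
        rw [QuotientGroup.eq]
        exact center_swap hc
      rw [← hrep1 x, ← hrep1 y, this]
  refine hstep.trans ?_
  -- compute ncard of the pi set
  have hpi : (Set.univ.pi A).ncard = ∏ s : {x // x ∈ S}, (A s).ncard := by
    rw [← Nat.card_coe_set_eq, Nat.card_eq_of_bijective _ (Equiv.Set.univPi A).bijective,
      Nat.card_pi]
    simp only [Nat.card_coe_set_eq]
  rw [hpi]
  have hub : ∀ s : {s // s ∈ S}, (A s).ncard ≤ C s * 2 ^ d s * (n + 1) ^ d s := by
    intro s
    have := hCd s s.2 (2 * n + 1)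
    simp only at this
    calc (A s).ncard ≤ C s * (2 * n + 1 + 1) ^ d s := this
      _ = C s * (2 * (n + 1)) ^ d s := by ring_nf
      _ = C s * 2 ^ d s * (n + 1) ^ d s := by rw [mul_pow]; ring
  calc ∏ s ∈ S.attach, (A s).ncard ≤ ∏ s : {x // x ∈ S}, C (s : Γ) * 2 ^ d s * (n + 1) ^ d s :=
        Finset.prod_le_prod (fun _ _ => Nat.zero_le _) (fun s _ => hub s)
    _ = (∏ s : {x // x ∈ S}, C (s : Γ)) * 2 ^ D * (n + 1) ^ D := by
        rw [Finset.prod_mul_distrib, Finset.prod_mul_distrib, Finset.prod_pow_eq_pow_sum,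
          Finset.prod_pow_eq_pow_sum]
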